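/- Inversion for arrow in BCD subtyping with products: For every finite family of types (Aᵢ)_{i∈I}, (Bᵢ)_{i∈I} and types A, B, if ⋂_{i∈I}(Aᵢ→Bᵢ) ≤ A→B in the BCD subtyping relation with products, then there exists a subset J ⊆ I such that ⋂_{i∈J}Bᵢ ≤ B (the empty intersection being Ω) and A ≤ Aᵢ for all i ∈ J. -/

import Mathlib

/-- Intersection types: base types, intersection, omega, arrow, product. -/
inductive Ty (X : Type) : Type
  | base : X → Ty X
  | inter : Ty X → Ty X → Ty X
  | omega : Ty X
  | arrow : Ty X → Ty X → Ty X
  | prod : Ty X → Ty X → Ty X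

/-- The BCD subtyping relation extended with product types. -/
inductive BCD {X : Type} : Ty X → Ty X → Prop
  | refl (A : Ty X) : BCD A A
  | trans {A B C : Ty X} : BCD A B → BCD B C → BCD A C
  | omega (A : Ty X) : BCD A .omega
  | inter_l1 (A B : Ty X) : BCD (.inter A B) A
  | inter_l2 (A B : Ty X) : BCD (.inter A B) B
  | inter_dup (A : Ty X) : BCD A (.inter A A)
  | inter_mono {A B C D : Ty X} : BCD A C → BCD B D → BCD (.inter A B) (.inter C D)
  | arrow_mono {A B C D : Ty X} : BCD C A → BCD B D → BCD (.arrow A B) (.arrow C D)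
  | arrow_inter (A B C : Ty X) :
      BCD (.inter (.arrow A B) (.arrow A C)) (.arrow A (.inter B C))
  | omega_arrow : BCD .omega (.arrow .omega .omega)
  | prod_mono {A B C D : Ty X} : BCD A C → BCD B D → BCD (.prod A B) (.prod C D)
  | prod_inter (A B C D : Ty X) :
      BCD (.inter (.prod A B) (.prod C D)) (.prod (.inter A C) (.inter B D))

/-- `A` is an intersection type. -/
def Ty.isInter {X : Type} : Ty X → Prop
  | .inter _ _ => True
  | _ => False

/-- The ISC sequent system instantiated with the constructors
`X`, `Ω`, `→`, `×` (Table 7 of the paper). -/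
inductive ISCp {X : Type} : List (Ty X) → Ty X → Prop
  | wk {Γ Δ : List (Ty X)} {C : Ty X} (A : Ty X) (hA : ¬ A.isInter) :
      ISCp (Γ ++ Δ) C → ISCp (Γ ++ A :: Δ) C
  | interR {Γ : List (Ty X)} {A B : Ty X} : ISCp Γ A → ISCp Γ B → ISCp Γ (.inter A B)
  | interL {Γ Δ : List (Ty X)} {A B C : Ty X} :
      ISCp (Γ ++ A :: B :: Δ) C → ISCp (Γ ++ Ty.inter A B :: Δ) C
  | ax (x : X) : ISCp [.base x] (.base x)
  | omega : ISCp [] .omega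
  | arrow (l : List (Ty X × Ty X)) (hl : l ≠ []) (A B : Ty X) :
      (∀ p ∈ l, ISCp [A] p.1) → ISCp (l.map Prod.snd) B →
      ISCp (l.map fun p => Ty.arrow p.1 p.2) (.arrow A B)
  | arrow0 (A : Ty X) {B : Ty X} : ISCp [] B → ISCp [] (.arrow A B)
  | prod (l : List (Ty X × Ty X)) (hl : l ≠ []) (A B : Ty X) :
      ISCp (l.map Prod.fst) A → ISCp (l.map Prod.snd) B →
      ISCp (l.map fun p => Ty.prod p.1 p.2) (.prod A B)

/-- Iterated intersection `A₁ ∩ … ∩ Aₙ` of a list of types, the empty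
intersection being `Ω`. -/
def interList {X : Type} : List (Ty X) → Ty X
  | [] => .omega
  | [A] => A
  | A :: l => .inter A (interList l)

namespace BCDAux
variable {X : Type}

/-- conjuncts of a type -/
def conj : Ty X → List (Ty X)
  | .inter A B => conj A ++ conj B
  | .omega => []
  | t => [t]

@[simp] lemma conj_base (x : X) : conj (Ty.base x) = [Ty.base x] := rfl
@[simp] lemma conj_arrow (A B : Ty X) : conj (Ty.arrow A B) = [Ty.arrow A B] := rfl
@[simp] lemma conj_prod (A B : Ty X) : conj (Ty.prod A B) = [Ty.prod A B] := rfl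
@[simp] lemma conj_omega : conj (Ty.omega : Ty X) = [] := rfl
@[simp] lemma conj_inter (A B : Ty X) : conj (Ty.inter A B) = conj A ++ conj B := rfl

lemma interList_cons (A : Ty X) (l : List (Ty X)) (hl : l ≠ []) :
    interList (A :: l) = Ty.inter A (interList l) := by
  cases l with
  | nil => exact absurd rfl hl
  | cons b m => rfl

lemma interList_le_mem : ∀ {l : List (Ty X)} {A}, A ∈ l → BCD (interList l) A := by
  intro l
  induction l with
  | nil => intro A h; exact absurd h List.not_mem_nil
  | cons a m ih =>
    intro A h
    cases m with
    | nil =>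
      rcases List.mem_singleton.mp h with rfl
      exact BCD.refl _
    | cons b m' =>
      rw [interList_cons a _ (by simp)]
      rcases List.mem_cons.mp h with rfl | h'
      · exact BCD.inter_l1 _ _
      · exact BCD.trans (BCD.inter_l2 _ _) (ih h')

lemma le_interList : ∀ {l : List (Ty X)} {C}, (∀ A ∈ l, BCD C A) → BCD C (interList l) := by
  intro l
  induction l with
  | nil => intro C _; exact BCD.omega C
  | cons a m ih =>
    intro C h
    cases m with
    | nil => exact h a (by simp)
    | cons b m' =>
      rw [interList_cons a _ (by simp)]
      exact BCD.trans (BCD.inter_dup C)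
        (BCD.inter_mono (h a (by simp)) (ih fun A hA => h A (List.mem_cons_of_mem _ hA)))

lemma sub_le {l m : List (Ty X)} (h : ∀ A ∈ m, A ∈ l) :
    BCD (interList l) (interList m) :=
  le_interList fun A hA => interList_le_mem (h A hA)

lemma mem_conj_interList : ∀ {M : List (Ty X)} {t}, t ∈ conj (interList M) → ∃ s ∈ M, t ∈ conj s := by
  intro M
  induction M with
  | nil => intro t h; simp [interList] at h
  | cons a m ih =>
    intro t h
    cases m with
    | nil => exact ⟨a, by simp, h⟩
    | cons b m' =>
      rw [interList_cons a _ (by simp)] at h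
      rcases List.mem_append.mp h with h' | h'
      · exact ⟨a, by simp, h'⟩
      · rcases ih h' with ⟨s, hs, ht⟩
        exact ⟨s, List.mem_cons_of_mem _ hs, ht⟩

/-- Invariant for the induction over BCD derivations. -/
def Inv (C D : Ty X) : Prop :=
  (∀ A B, Ty.arrow A B ∈ conj D → ∃ J : List (Ty X × Ty X),
     (∀ p ∈ J, Ty.arrow p.1 p.2 ∈ conj C) ∧
     BCD (interList (J.map Prod.snd)) B ∧ ∀ p ∈ J, BCD A p.1) ∧
  (∀ A B, Ty.prod A B ∈ conj D → ∃ J : List (Ty X × Ty X), J ≠ [] ∧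
     (∀ p ∈ J, Ty.prod p.1 p.2 ∈ conj C) ∧
     BCD (interList (J.map Prod.fst)) A ∧ BCD (interList (J.map Prod.snd)) B) ∧
  (∀ x : X, Ty.base x ∈ conj D → Ty.base x ∈ conj C)

lemma Inv_of_sub {C D : Ty X} (hs : ∀ t ∈ conj D, t ∈ conj C) : Inv C D := by
  refine ⟨?_, ?_, ?_⟩
  · intro A B h
    exact ⟨[(A, B)], by simpa using hs _ h, BCD.refl _, by simp [BCD.refl]⟩
  · intro A B h
    exact ⟨[(A, B)], by simp, by simpa using hs _ h, BCD.refl _, BCD.refl _⟩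
  · intro x h; exact hs _ h

lemma glue_arrow {C E : Ty X} (h1 : Inv C E) :
    ∀ J : List (Ty X × Ty X), (∀ p ∈ J, Ty.arrow p.1 p.2 ∈ conj E) →
    ∃ K : List (Ty X × Ty X),
      (∀ q ∈ K, Ty.arrow q.1 q.2 ∈ conj C ∧ ∃ p ∈ J, BCD p.1 q.1) ∧
      BCD (interList (K.map Prod.snd)) (interList (J.map Prod.snd)) := by
  intro J
  induction J with
  | nil => intro _; exact ⟨[], by simp, BCD.refl _⟩
  | cons p J' ih =>
    intro hJ
    obtain ⟨K', hK'mem, hK'le⟩ := ih fun q hq => hJ q (List.mem_cons_of_mem _ hq)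
    obtain ⟨Jp, hJpmem, hJple, hJpfst⟩ := h1.1 p.1 p.2 (hJ p (List.mem_cons_self))
    refine ⟨Jp ++ K', ?_, ?_⟩
    · intro q hq
      rcases List.mem_append.mp hq with h' | h'
      · exact ⟨hJpmem q h', p, List.mem_cons_self, hJpfst q h'⟩
      · obtain ⟨hm, p', hp', hle⟩ := hK'mem q h'
        exact ⟨hm, p', List.mem_cons_of_mem _ hp', hle⟩
    · apply le_interList
      intro b hb
      rcases List.mem_map.mp hb with ⟨r, hr, rfl⟩
      rcases List.mem_cons.mp hr with rfl | hr'
      · refine BCD.trans (sub_le ?_) hJple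
        intro s hs
        rcases List.mem_map.mp hs with ⟨q, hq, rfl⟩
        exact List.mem_map_of_mem (List.mem_append_left _ hq)
      · refine BCD.trans (BCD.trans (sub_le ?_) hK'le) (interList_le_mem (List.mem_map_of_mem hr'))
        intro s hs
        rcases List.mem_map.mp hs with ⟨q, hq, rfl⟩
        exact List.mem_map_of_mem (List.mem_append_right _ hq)

lemma glue_prod {C E : Ty X} (h1 : Inv C E) :
    ∀ J : List (Ty X × Ty X), (∀ p ∈ J, Ty.prod p.1 p.2 ∈ conj E) →
    ∃ K : List (Ty X × Ty X), (J ≠ [] → K ≠ []) ∧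
      (∀ q ∈ K, Ty.prod q.1 q.2 ∈ conj C) ∧
      BCD (interList (K.map Prod.fst)) (interList (J.map Prod.fst)) ∧
      BCD (interList (K.map Prod.snd)) (interList (J.map Prod.snd)) := by
  intro J
  induction J with
  | nil => intro _; exact ⟨[], by simp, by simp, BCD.refl _, BCD.refl _⟩
  | cons p J' ih =>
    intro hJ
    obtain ⟨K', _, hK'mem, hK'f, hK's⟩ := ih fun q hq => hJ q (List.mem_cons_of_mem _ hq)
    obtain ⟨Jp, hJpne, hJpmem, hJpf, hJps⟩ := h1.2.1 p.1 p.2 (hJ p (List.mem_cons_self))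
    refine ⟨Jp ++ K', fun _ => by simp [hJpne], ?_, ?_, ?_⟩
    · intro q hq
      rcases List.mem_append.mp hq with h' | h'
      · exact hJpmem q h'
      · exact hK'mem q h'
    all_goals {
      apply le_interList
      intro b hb
      rcases List.mem_map.mp hb with ⟨r, hr, rfl⟩
      rcases List.mem_cons.mp hr with rfl | hr'
      · refine BCD.trans (sub_le ?_) (by first | exact hJpf | exact hJps)
        intro s hs
        rcases List.mem_map.mp hs with ⟨q, hq, rfl⟩
        exact List.mem_map_of_mem (List.mem_append_left _ hq)
      · refine BCD.trans (BCD.trans (sub_le ?_) (by first | exact hK'f | exact hK's))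
          (interList_le_mem (List.mem_map_of_mem hr'))
        intro s hs
        rcases List.mem_map.mp hs with ⟨q, hq, rfl⟩
        exact List.mem_map_of_mem (List.mem_append_right _ hq) }

lemma Inv_trans {C E D : Ty X} (h1 : Inv C E) (h2 : Inv E D) : Inv C D := by
  refine ⟨?_, ?_, ?_⟩
  · intro A B h
    obtain ⟨J, hJmem, hJle, hJfst⟩ := h2.1 A B h
    obtain ⟨K, hKmem, hKle⟩ := glue_arrow h1 J hJmem
    refine ⟨K, fun q hq => (hKmem q hq).1, BCD.trans hKle hJle, ?_⟩
    intro q hq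
    obtain ⟨_, p, hp, hle⟩ := hKmem q hq
    exact BCD.trans (hJfst p hp) hle
  · intro A B h
    obtain ⟨J, hJne, hJmem, hJf, hJs⟩ := h2.2.1 A B h
    obtain ⟨K, hKne, hKmem, hKf, hKs⟩ := glue_prod h1 J hJmem
    exact ⟨K, hKne hJne, hKmem, BCD.trans hKf hJf, BCD.trans hKs hJs⟩
  · intro x h
    exact h1.2.2 x (h2.2.2 x h)

theorem bcd_inv {S T : Ty X} (h : BCD S T) : Inv S T := by
  induction h with
  | refl A => exact Inv_of_sub fun t ht => ht
  | trans _ _ ih1 ih2 => exact Inv_trans ih1 ih2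
  | omega A => exact ⟨by simp, by simp, by simp⟩
  | inter_l1 A B => exact Inv_of_sub fun t ht => by simp [ht]
  | inter_l2 A B => exact Inv_of_sub fun t ht => by simp [ht]
  | inter_dup A =>
    refine Inv_of_sub fun t ht => ?_
    rcases List.mem_append.mp ht with h' | h' <;> exact h'
  | inter_mono _ _ ih1 ih2 =>
    refine ⟨?_, ?_, ?_⟩
    · intro A' B' h
      rcases List.mem_append.mp h with h' | h'
      · obtain ⟨J, hm, hle, hf⟩ := ih1.1 A' B' h'
        exact ⟨J, fun p hp => by simp [hm p hp], hle, hf⟩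
      · obtain ⟨J, hm, hle, hf⟩ := ih2.1 A' B' h'
        exact ⟨J, fun p hp => by simp [hm p hp], hle, hf⟩
    · intro A' B' h
      rcases List.mem_append.mp h with h' | h'
      · obtain ⟨J, hne, hm, hf, hs⟩ := ih1.2.1 A' B' h'
        exact ⟨J, hne, fun p hp => by simp [hm p hp], hf, hs⟩
      · obtain ⟨J, hne, hm, hf, hs⟩ := ih2.2.1 A' B' h'
        exact ⟨J, hne, fun p hp => by simp [hm p hp], hf, hs⟩
    · intro x h
      rcases List.mem_append.mp h with h' | h'
      · simp [ih1.2.2 x h']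
      · simp [ih2.2.2 x h']
  | @arrow_mono A B C D h1 h2 _ _ =>
    refine ⟨?_, ?_, ?_⟩
    · intro A' B' h
      rcases List.mem_singleton.mp h with h'
      injection h' with e1 e2
      subst e1; subst e2
      exact ⟨[(A, B)], by simp, h2, by simpa using h1⟩
    · intro A' B' h
      rcases List.mem_singleton.mp h with h'
      exact absurd h' (by simp)
    · intro x h
      exact absurd (List.mem_singleton.mp h) (by simp)
  | arrow_inter A B C =>
    refine ⟨?_, ?_, ?_⟩
    · intro A' B' h
      rcases List.mem_singleton.mp h with h'
      injection h' with e1 e2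
      subst e1; subst e2
      refine ⟨[(A', B), (A', C)], by simp, ?_, by simp [BCD.refl]⟩
      exact BCD.refl _
    · intro A' B' h
      exact absurd (List.mem_singleton.mp h) (by simp)
    · intro x h
      exact absurd (List.mem_singleton.mp h) (by simp)
  | omega_arrow =>
    refine ⟨?_, ?_, ?_⟩
    · intro A' B' h
      rcases List.mem_singleton.mp h with h'
      injection h' with e1 e2
      subst e1; subst e2
      exact ⟨[], by simp, BCD.refl _, by simp⟩
    · intro A' B' h
      exact absurd (List.mem_singleton.mp h) (by simp)
    · intro x h
      exact absurd (List.mem_singleton.mp h) (by simp)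
  | @prod_mono A B C D h1 h2 _ _ =>
    refine ⟨?_, ?_, ?_⟩
    · intro A' B' h
      exact absurd (List.mem_singleton.mp h) (by simp)
    · intro A' B' h
      rcases List.mem_singleton.mp h with h'
      injection h' with e1 e2
      subst e1; subst e2
      exact ⟨[(A, B)], by simp, by simp, h1, h2⟩
    · intro x h
      exact absurd (List.mem_singleton.mp h) (by simp)
  | prod_inter A B C D =>
    refine ⟨?_, ?_, ?_⟩
    · intro A' B' h
      exact absurd (List.mem_singleton.mp h) (by simp)
    · intro A' B' h
      rcases List.mem_singleton.mp h with h'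
      injection h' with e1 e2
      subst e1; subst e2
      exact ⟨[(A, B), (C, D)], by simp, by simp, BCD.refl _, BCD.refl _⟩
    · intro x h
      exact absurd (List.mem_singleton.mp h) (by simp)

lemma extract_sublist {α : Type} (J : List α) :
    ∀ l : List α, ∃ l' : List α, l'.Sublist l ∧ (∀ p ∈ l', p ∈ J) ∧
      (∀ p ∈ J, p ∈ l → p ∈ l') := by
  intro l
  induction l with
  | nil => exact ⟨[], List.Sublist.refl _, by simp, by simp⟩
  | cons a m ih =>
    obtain ⟨l'', hsub, hmem, hcov⟩ := ih
    by_cases ha : a ∈ J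
    · refine ⟨a :: l'', hsub.cons₂ a, ?_, ?_⟩
      · intro p hp
        rcases List.mem_cons.mp hp with rfl | hp'
        · exact ha
        · exact hmem p hp'
      · intro p hp hpl
        rcases List.mem_cons.mp hpl with rfl | hpl'
        · exact List.mem_cons_self
        · exact List.mem_cons_of_mem _ (hcov p hp hpl')
    · refine ⟨l'', hsub.cons a, hmem, ?_⟩
      intro p hp hpl
      rcases List.mem_cons.mp hpl with rfl | hpl'
      · exact absurd hp ha
      · exact hcov p hp hpl'

end BCDAux

/-- Inversion for arrow in BCD subtyping with products: if
`⋂ᵢ (Aᵢ → Bᵢ) ≤ A → B` then there is a subfamily `J` with `⋂_{i∈J} Bᵢ ≤ B`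
and `A ≤ Aᵢ` for all `i ∈ J`. -/
theorem BCD.arrow_inversion {X : Type} [Countable X]
    (l : List (Ty X × Ty X)) (A B : Ty X)
    (h : BCD (interList (l.map fun p => Ty.arrow p.1 p.2)) (Ty.arrow A B)) :
    ∃ l' : List (Ty X × Ty X), l'.Sublist l ∧
      BCD (interList (l'.map Prod.snd)) B ∧ ∀ p ∈ l', BCD A p.1 := by
  classical
  obtain ⟨J, hJmem, hJle, hJfst⟩ := (BCDAux.bcd_inv h).1 A B (by simp [BCDAux.conj])
  have hJl : ∀ p ∈ J, p ∈ l := by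
    intro p hp
    obtain ⟨s, hs, hts⟩ := BCDAux.mem_conj_interList (hJmem p hp)
    rcases List.mem_map.mp hs with ⟨q, hq, rfl⟩
    rcases List.mem_singleton.mp hts with h'
    injection h' with e1 e2
    have : p = q := Prod.ext e1 e2
    exact this ▸ hq
  obtain ⟨l', hsub, hmem, hcov⟩ := BCDAux.extract_sublist J l
  refine ⟨l', hsub, ?_, ?_⟩
  · refine BCD.trans (BCDAux.sub_le ?_) hJle
    intro s hs
    rcases List.mem_map.mp hs with ⟨q, hq, rfl⟩
    exact List.mem_map_of_mem (hcov q hq (hJl q hq))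
  · intro p hp
    exact hJfst p (hmem p hp)
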